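/- Let W[1..m] be a sequence of m ≥ 1 binary strings of length ℓ ≥ 1 and let T = SeqToString_ℓ(W). For every X ∈ {0,1}^{≤ℓ} and every i ∈ [1..PrefixRank(W,m,X)], it holds PrefixSelect(W,i,X) = ⌈ SA_T[α + i] / β ⌉, where α = RangeBeg(rev(X)·4, T) and β = ℓ + ⌊log₂ m⌋ + 2. -/

import Mathlib

/-- Strict lexicographic order on strings: `U ≺ V` iff `U` is a proper prefix of `V`,
or `U` and `V` first differ at a position where `U` has the smaller symbol. -/
def LexLt {α : Type*} [LT α] (U V : List α) : Prop := List.Lex (· < ·) U V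

/-- Non-strict lexicographic order on strings. -/
def LexLe {α : Type*} [LT α] (U V : List α) : Prop := LexLt U V ∨ U = V

/-- The suffix `T[j..|T|]` of `T` (1-based index `j`). -/
def Suf {α : Type*} (T : List α) (j : ℕ) : List α := T.drop (j - 1)

/-- `Occ P T` is the set of starting positions (1-based) of occurrences of `P` in `T`. -/
def Occ {α : Type*} (P T : List α) : Set ℕ :=
  { j | 1 ≤ j ∧ j + P.length ≤ T.length + 1 ∧ (Suf T j).take P.length = P }

/-- `RangeBeg P T` = number of suffixes of `T` lexicographically smaller than `P`. -/
noncomputable def RangeBeg {α : Type*} [LT α] (P T : List α) : ℕ :=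
  { j | 1 ≤ j ∧ j ≤ T.length ∧ LexLt (Suf T j) P }.ncard

/-- `RangeEnd P T = RangeBeg P T + |Occ P T|`. -/
noncomputable def RangeEnd {α : Type*} [LT α] (P T : List α) : ℕ :=
  RangeBeg P T + (Occ P T).ncard

/-- `LexRange P₁ P₂ T` = positions `j ∈ [1..|T|]` with `P₁ ⪯ T[j..|T|] ≺ P₂`. -/
def LexRange {α : Type*} [LT α] (P₁ P₂ T : List α) : Set ℕ :=
  { j | 1 ≤ j ∧ j ≤ T.length ∧ LexLe P₁ (Suf T j) ∧ LexLt (Suf T j) P₂ }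

/-- `sa` is the suffix array of `T` (1-based): a permutation of `[1..|T|]` listing the
starting positions of the suffixes of `T` in increasing lexicographic order. -/
def IsSuffixArray {α : Type*} [LT α] (T : List α) (sa : ℕ → ℕ) : Prop :=
  (∀ i, 1 ≤ i → i ≤ T.length → 1 ≤ sa i ∧ sa i ≤ T.length) ∧
  (∀ j, 1 ≤ j → j ≤ T.length → ∃ i, 1 ≤ i ∧ i ≤ T.length ∧ sa i = j) ∧
  (∀ i j, 1 ≤ i → i < j → j ≤ T.length → LexLt (Suf T (sa i)) (Suf T (sa j)))

/-- `binSym k x` : the length-`k` binary representation of `x` (MSB first, leading zeros). -/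
def binSym (k x : ℕ) : List ℕ := (List.range k).map fun i => x / 2 ^ (k - 1 - i) % 2

/-- `binStr k S` = `bin_k(S[1]) · bin_k(S[2]) · … · bin_k(S[|S|])`. -/
def binStr (k : ℕ) (S : List ℕ) : List ℕ := (S.map (binSym k)).flatten

/-- `ebinSym k x = 1^{k+1} · 0 · bin_k(x) · 0`. -/
def ebinSym (k x : ℕ) : List ℕ := List.replicate (k + 1) 1 ++ [0] ++ binSym k x ++ [0]

/-- `ebinStr k S` = concatenation of `ebin_k(S[i])` for `i = 1, …, |S|`. -/
def ebinStr (k : ℕ) (S : List ℕ) : List ℕ := (S.map (ebinSym k)).flatten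

/-- `sEnc k i` : length-`k` base-2 representation of `i` with `0 ↦ 2` and `1 ↦ 3`. -/
def sEnc (k i : ℕ) : List ℕ := (binSym k i).map (· + 2)

/-- `SeqToString m W = ⊙_{i=1}^{m} rev(W[i]) · 4 · s(i-1)` with `k = 1 + ⌊log₂ m⌋`. -/
def SeqToString (m : ℕ) (W : ℕ → List ℕ) : List ℕ :=
  ((List.range m).map
    fun i => (W (i + 1)).reverse ++ [4] ++ sEnc (1 + Nat.log 2 m) i).flatten

/-- `PermSeqToString m π W = ⊙_{i=1}^{m} rev(W[π[i]]) · 4 · s(π[i]-1)`. -/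
def PermSeqToString (m : ℕ) (perm : ℕ → ℕ) (W : ℕ → List ℕ) : List ℕ :=
  ((List.range m).map
    fun i => (W (perm (i + 1))).reverse ++ [4]
      ++ sEnc (1 + Nat.log 2 m) (perm (i + 1) - 1)).flatten

/-- `PrefixRank W j X = |{ i ∈ [1..j] : X is a prefix of W[i] }|`. -/
noncomputable def PrefixRank {α : Type*} (W : ℕ → List α) (j : ℕ) (X : List α) : ℕ :=
  { i | 1 ≤ i ∧ i ≤ j ∧ X <+: W i }.ncard

/-- `p` is the `r`-th smallest element of the set `A ⊆ ℕ`. -/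
def IsKthSmallest (A : Set ℕ) (r p : ℕ) : Prop :=
  p ∈ A ∧ (A ∩ Set.Iic p).ncard = r

/-- Ceiling division `⌈a / b⌉` of positive naturals. -/
def cdiv (a b : ℕ) : ℕ := (a + b - 1) / b

/-- Alphabet inversion: `inv_σ(S)[i] = σ - 1 - S[i]`. -/
def invStr (σ : ℕ) (S : List ℕ) : List ℕ := S.map fun a => σ - 1 - a

/-- `p` is a period of `S`: `1 ≤ p ≤ |S|` and `S[i] = S[i+p]` for all `i ∈ [1..|S|-p]`. -/
def IsPeriod {α : Type*} (S : List α) (p : ℕ) : Prop :=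
  1 ≤ p ∧ p ≤ S.length ∧ S.drop p <+: S

/-- `per S`: the smallest period of `S`. -/
noncomputable def per {α : Type*} (S : List α) : ℕ := sInf { p | IsPeriod S p }

/-- `P` is `τ`-periodic: `|P| ≥ 3τ - 1` and `per(P[1..3τ-1]) ≤ τ/3`. -/
noncomputable def TauPeriodic {α : Type*} (τ : ℕ) (P : List α) : Prop :=
  3 * τ ≤ P.length + 1 ∧ 3 * per (P.take (3 * τ - 1)) ≤ τ

/-- `R(τ,T) = { i ∈ [1..n-3τ+2] : per(T[i..i+3τ-2]) ≤ τ/3 }`. -/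
noncomputable def Rset {α : Type*} (τ : ℕ) (T : List α) : Set ℕ :=
  { i | 1 ≤ i ∧ i + 3 * τ ≤ T.length + 2 ∧ 3 * per ((Suf T i).take (3 * τ - 1)) ≤ τ }

/-- `S` is a `τ`-synchronizing set of `T` (consistency and density conditions). -/
noncomputable def IsSyncSet {α : Type*} (τ : ℕ) (T : List α) (S : Set ℕ) : Prop :=
  (∀ j ∈ S, 1 ≤ j ∧ j + 2 * τ ≤ T.length + 1) ∧
  (∀ i j, 1 ≤ i → i + 2 * τ ≤ T.length + 1 → 1 ≤ j → j + 2 * τ ≤ T.length + 1 →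
    (Suf T i).take (2 * τ) = (Suf T j).take (2 * τ) → (i ∈ S ↔ j ∈ S)) ∧
  (∀ i, 1 ≤ i → i + 3 * τ ≤ T.length + 2 → (S ∩ Set.Ico i (i + τ) = ∅ ↔ i ∈ Rset τ T))

/-- `succ_S(x) = min { x' ∈ S : x' ≥ x }`. -/
noncomputable def succS (S : Set ℕ) (x : ℕ) : ℕ := sInf (S ∩ Set.Ici x)

/-- `DistPrefixes(τ,T,S) = { T[j..succ_S(j)+2τ) : j ∈ [1..n-3τ+2] \ R(τ,T) }`. -/
noncomputable def DistPrefixes {α : Type*} (τ : ℕ) (T : List α) (S : Set ℕ) : Set (List α) :=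
  (fun j => (Suf T j).take (succS S j + 2 * τ - j)) ''
    { j | 1 ≤ j ∧ j + 3 * τ ≤ T.length + 2 ∧ j ∉ Rset τ T }

/-- `r` is the value of the prefix RMQ: the smallest index `i ∈ (b..e]` with `X` a prefix of
`W[i]` minimizing `A[i]` (ties broken towards the smaller index). -/
def IsPrefixRMQ (A : ℕ → ℤ) (W : ℕ → List ℕ) (b e : ℕ) (X : List ℕ) (r : ℕ) : Prop :=
  (b < r ∧ r ≤ e ∧ X <+: W r) ∧
  (∀ i, b < i → i ≤ e → X <+: W i → A r ≤ A i) ∧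
  (∀ i, b < i → i ≤ e → X <+: W i → A i = A r → r ≤ i)

theorem flatten_drop_blocks {α : Type*} (β : ℕ) :
    ∀ (q : ℕ) (L : List (List α)), (∀ l ∈ L, l.length = β) →
      L.flatten.drop (q * β) = (L.drop q).flatten := by
  intro q
  induction q with
  | zero => intro L _; simp
  | succ q ih =>
    intro L hL
    cases L with
    | nil => simp
    | cons l L' =>
      have hl : l.length = β := hL l (by simp)
      have : (q+1) * β = l.length + q * β := by rw [hl]; ring
      rw [List.flatten_cons, this, List.drop_length_add_append]
      rw [ih L' (fun x hx => hL x (by simp [hx]))]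
      simp
theorem flatten_length_blocks {α : Type*} (β : ℕ) (L : List (List α))
    (hL : ∀ l ∈ L, l.length = β) : L.flatten.length = L.length * β := by
  rw [List.length_flatten, List.map_congr_left (fun l hl => hL l hl)]
  simp [mul_comm]
def BlkF (m : ℕ) (W : ℕ → List ℕ) (i : ℕ) : List ℕ :=
  (W (i+1)).reverse ++ [4] ++ sEnc (1 + Nat.log 2 m) i
def RestF (m : ℕ) (W : ℕ → List ℕ) (q : ℕ) : List ℕ :=
  (((List.range m).drop q).map (BlkF m W)).flatten
theorem seqToString_eq (m : ℕ) (W : ℕ → List ℕ) :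
    SeqToString m W = ((List.range m).map (BlkF m W)).flatten := rfl
theorem sEnc_length (k x : ℕ) : (sEnc k x).length = k := by simp [sEnc, binSym]
theorem blk_length {m ℓ : ℕ} {W : ℕ → List ℕ}
    (hWlen : ∀ i, 1 ≤ i → i ≤ m → (W i).length = ℓ) (i : ℕ) (hi : i < m) :
    (BlkF m W i).length = ℓ + Nat.log 2 m + 2 := by
  simp [BlkF, sEnc_length, hWlen (i+1) (by omega) (by omega)]
  omega
theorem blocks_length {m ℓ : ℕ} {W : ℕ → List ℕ}
    (hWlen : ∀ i, 1 ≤ i → i ≤ m → (W i).length = ℓ) :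
    ∀ l ∈ (List.range m).map (BlkF m W), l.length = ℓ + Nat.log 2 m + 2 := by
  intro l hl
  obtain ⟨i, hi, rfl⟩ := List.mem_map.mp hl
  exact blk_length hWlen i (List.mem_range.mp hi)
theorem T_length {m ℓ : ℕ} {W : ℕ → List ℕ}
    (hWlen : ∀ i, 1 ≤ i → i ≤ m → (W i).length = ℓ) :
    (SeqToString m W).length = m * (ℓ + Nat.log 2 m + 2) := by
  rw [seqToString_eq, flatten_length_blocks _ _ (blocks_length hWlen)]
  simp
theorem T_drop {m ℓ : ℕ} {W : ℕ → List ℕ}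
    (hWlen : ∀ i, 1 ≤ i → i ≤ m → (W i).length = ℓ) (q t : ℕ) (hq : q < m)
    (ht : t ≤ ℓ + Nat.log 2 m + 2) :
    (SeqToString m W).drop (q * (ℓ + Nat.log 2 m + 2) + t)
      = (BlkF m W q).drop t ++ RestF m W (q+1) := by
  rw [seqToString_eq,
    ← List.drop_drop, flatten_drop_blocks _ q _ (blocks_length hWlen)]
  rw [← List.map_drop]
  rw [List.drop_eq_getElem_cons (l := List.range m) (by simpa using hq)]
  rw [List.getElem_range]
  rw [List.map_cons, List.flatten_cons]
  rw [List.drop_append_of_le_length (by rw [blk_length hWlen q hq]; exact ht)]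
  rw [RestF, List.map_drop]
theorem binSym_mem (k x : ℕ) : ∀ a ∈ binSym k x, a < 2 := by
  intro a ha
  simp only [binSym, List.mem_map, List.mem_range] at ha
  obtain ⟨i, _, rfl⟩ := ha
  exact Nat.mod_lt _ (by norm_num)
theorem sEnc_mem (k x : ℕ) : ∀ a ∈ sEnc k x, a = 2 ∨ a = 3 := by
  intro a ha
  simp only [sEnc, List.mem_map] at ha
  obtain ⟨b, hb, rfl⟩ := ha
  have := binSym_mem k x b hb
  omega
theorem char4 {m ℓ : ℕ} {W : ℕ → List ℕ}
    (hWlen : ∀ i, 1 ≤ i → i ≤ m → (W i).length = ℓ)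
    (hWbin : ∀ i, 1 ≤ i → i ≤ m → ∀ a ∈ W i, a < 2)
    (idx : ℕ) (hidx : idx < m * (ℓ + Nat.log 2 m + 2)) :
    (SeqToString m W)[idx]? = some 4 ↔ idx % (ℓ + Nat.log 2 m + 2) = ℓ := by
  obtain ⟨q, r, hqr, hr⟩ :
      ∃ q r, idx = q * (ℓ + Nat.log 2 m + 2) + r ∧ r < ℓ + Nat.log 2 m + 2 :=
    ⟨idx / (ℓ + Nat.log 2 m + 2), idx % (ℓ + Nat.log 2 m + 2),
      by rw [mul_comm]; exact (Nat.div_add_mod idx _).symm,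
      Nat.mod_lt _ (by omega)⟩
  have hmod : idx % (ℓ + Nat.log 2 m + 2) = r := by
    rw [hqr, Nat.add_comm, Nat.add_mul_mod_self_right, Nat.mod_eq_of_lt hr]
  rw [hmod]
  have hq : q < m := by
    by_contra h
    push_neg at h
    have : m * (ℓ + Nat.log 2 m + 2) ≤ q * (ℓ + Nat.log 2 m + 2) :=
      Nat.mul_le_mul_right _ h
    omega
  have hdrop : (SeqToString m W).drop (q * (ℓ + Nat.log 2 m + 2))
      = BlkF m W q ++ RestF m W (q+1) := by
    simpa using T_drop hWlen q 0 hq (by omega)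
  have hval : (SeqToString m W)[idx]? = (BlkF m W q ++ RestF m W (q+1))[r]? := by
    conv_lhs => rw [hqr, ← List.getElem?_drop, hdrop]
  have hA : (W (q+1)).reverse.length = ℓ := by
    rw [List.length_reverse]; exact hWlen (q+1) (by omega) (by omega)
  rw [hval]
  rw [show BlkF m W q ++ RestF m W (q+1)
      = (W (q+1)).reverse ++ (([4] ++ sEnc (1 + Nat.log 2 m) q) ++ RestF m W (q+1)) by
    simp [BlkF]]
  rcases Nat.lt_trichotomy r ℓ with hcase | hcase | hcase
  · rw [List.getElem?_append_left (by omega)]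
    rw [List.getElem?_eq_getElem (by omega)]
    have hmem : (W (q+1)).reverse[r]'(by omega) ∈ (W (q+1)).reverse := List.getElem_mem _
    rw [List.mem_reverse] at hmem
    have := hWbin (q+1) (by omega) (by omega) _ hmem
    constructor
    · intro h; injection h with h'; omega
    · intro h; omega
  · subst hcase
    rw [List.getElem?_append_right (by omega)]
    rw [show r - (W (q+1)).reverse.length = 0 by omega]
    simp
  · rw [List.getElem?_append_right (by omega)]
    rw [show ([4] ++ sEnc (1 + Nat.log 2 m) q) ++ RestF m W (q+1)
        = 4 :: (sEnc (1 + Nat.log 2 m) q ++ RestF m W (q+1)) by simp]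
    rw [show r - (W (q+1)).reverse.length = (r - ℓ - 1) + 1 by omega]
    rw [List.getElem?_cons_succ]
    have hlt : r - ℓ - 1 < (sEnc (1 + Nat.log 2 m) q).length := by
      rw [sEnc_length]; omega
    rw [List.getElem?_append_left (by omega)]
    rw [List.getElem?_eq_getElem hlt]
    have hmem := sEnc_mem (1 + Nat.log 2 m) q _ (List.getElem_mem hlt)
    constructor
    · intro h; injection h with h'; omega
    · intro h; omega
theorem lexAppendBoth {α : Type*} {r : α → α → Prop} :
    ∀ {A B : List α}, List.Lex r A B → A.length = B.length →
      ∀ C D, List.Lex r (A ++ C) (B ++ D) := by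
  intro A B h
  induction h with
  | nil => intro hl; simp at hl
  | @rel a l₁ b l₂ h => intro _ C D; exact List.Lex.rel h
  | @cons a l₁ l₂ h ih => intro hl C D; exact List.Lex.cons (ih (by simpa using hl) C D)
theorem notLexAppendSelf {α : Type*} {r : α → α → Prop} [IsIrrefl α r] :
    ∀ (P C : List α), ¬ List.Lex r (P ++ C) P := by
  intro P
  induction P with
  | nil => intro C h; cases h
  | cons a P ih =>
    intro C h
    cases h with
    | rel h => exact irrefl a h
    | cons h => exact ih C h
theorem lexOfLexAppend {α : Type*} {r : α → α → Prop} :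
    ∀ (P : List α) {B C : List α}, List.Lex r B (P ++ C) → List.Lex r B P ∨ P <+: B := by
  intro P
  induction P with
  | nil => intro B C h; exact Or.inr (List.nil_prefix)
  | cons a P ih =>
    intro B C h
    cases h with
    | nil => exact Or.inl List.Lex.nil
    | rel h => exact Or.inl (List.Lex.rel h)
    | cons h =>
      rcases ih h with h' | ⟨t, ht⟩
      · exact Or.inl (List.Lex.cons h')
      · exact Or.inr ⟨t, by simp [← ht]⟩
theorem lexMapMono {α β : Type*} {r : α → α → Prop} {s : β → β → Prop} {f : α → β}
    (hf : ∀ a b, r a b → s (f a) (f b)) :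
    ∀ {A B : List α}, List.Lex r A B → List.Lex s (A.map f) (B.map f) := by
  intro A B h
  induction h with
  | nil => exact List.Lex.nil
  | rel h => exact List.Lex.rel (hf _ _ h)
  | cons _ ih => exact List.Lex.cons ih
theorem binSym_length (k x : ℕ) : (binSym k x).length = k := by simp [binSym]
theorem binSym_succ (k x : ℕ) : binSym (k+1) x = (x / 2^k % 2) :: binSym k x := by
  unfold binSym
  rw [List.range_succ_eq_map]
  simp only [List.map_cons, List.map_map, Function.comp]
  refine List.cons_eq_cons.mpr ⟨by simp, ?_⟩
  apply List.map_congr_left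
  intro i hi
  simp only [List.mem_range] at hi
  show x / 2 ^ (k + 1 - 1 - (i+1)) % 2 = x / 2 ^ (k - 1 - i) % 2
  have e : k + 1 - 1 - (i+1) = k - 1 - i := by omega
  rw [e]
theorem div_pow_mod_two (a j k : ℕ) (h : j < k) : a % 2^k / 2^j % 2 = a / 2^j % 2 := by
  have h1 := Nat.testBit_mod_two_pow a k j
  rw [Nat.testBit_eq_decide_div_mod_eq, Nat.testBit_eq_decide_div_mod_eq] at h1
  simp only [h, decide_true, Bool.true_and] at h1
  have h2 := decide_eq_decide.mp h1
  have h3 : a % 2^k / 2^j % 2 < 2 := Nat.mod_lt _ (by norm_num)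
  have h4 : a / 2^j % 2 < 2 := Nat.mod_lt _ (by norm_num)
  omega
theorem binSym_mod (k x : ℕ) : binSym k (x % 2^k) = binSym k x := by
  unfold binSym
  apply List.map_congr_left
  intro i hi
  simp only [List.mem_range] at hi
  exact div_pow_mod_two x (k - 1 - i) k (by omega)
theorem binSym_lex (k : ℕ) : ∀ x y : ℕ, x < y → y < 2^k →
    List.Lex (· < ·) (binSym k x) (binSym k y) := by
  induction k with
  | zero => intro x y h1 h2; omega
  | succ k ih =>
    intro x y h1 h2
    rw [binSym_succ, binSym_succ]
    have hx2 : x < 2^(k+1) := by omega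
    have hy : y / 2^k < 2 := Nat.div_lt_of_lt_mul (by rw [pow_succ] at h2; omega)
    have hx : x / 2^k < 2 := Nat.div_lt_of_lt_mul (by rw [pow_succ] at hx2; omega)
    have hxd : x / 2^k ≤ y / 2^k := Nat.div_le_div_right h1.le
    rcases lt_or_eq_of_le hxd with hlt | heq
    · exact List.Lex.rel (by rw [Nat.mod_eq_of_lt hx, Nat.mod_eq_of_lt hy]; exact hlt)
    · rw [Nat.mod_eq_of_lt hx, Nat.mod_eq_of_lt hy, heq]
      apply List.Lex.cons
      rw [← binSym_mod k x, ← binSym_mod k y]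
      apply ih
      · have ex := Nat.div_add_mod x (2^k)
        rw [heq] at ex
        have ey := Nat.div_add_mod y (2^k)
        have rx : x % 2^k < 2^k := Nat.mod_lt _ (Nat.two_pow_pos k)
        have ry : y % 2^k < 2^k := Nat.mod_lt _ (Nat.two_pow_pos k)
        omega
      · exact Nat.mod_lt _ (Nat.two_pow_pos k)
theorem suffix_at {m ℓ : ℕ} {W : ℕ → List ℕ}
    (hWlen : ∀ i, 1 ≤ i → i ≤ m → (W i).length = ℓ)
    (X : List ℕ) (hX : X.length ≤ ℓ) (j : ℕ) (h1 : 1 ≤ j) (h2 : j ≤ m)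
    (hpre : X <+: W j) :
    (SeqToString m W).drop ((j-1) * (ℓ + Nat.log 2 m + 2) + (ℓ - X.length))
      = (X.reverse ++ [4]) ++ (sEnc (1 + Nat.log 2 m) (j-1) ++ RestF m W j) := by
  rw [T_drop hWlen (j-1) (ℓ - X.length) (by omega) (by omega)]
  have hj : j - 1 + 1 = j := by omega
  rw [BlkF, hj]
  have hWj : (W j).length = ℓ := hWlen j h1 h2
  have hrev : (W j).reverse.drop (ℓ - X.length) = X.reverse := by
    rw [List.drop_reverse, hWj, show ℓ - (ℓ - X.length) = X.length by omega]
    congr 1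
    exact (List.prefix_iff_eq_take.mp hpre).symm
  rw [show (W j).reverse ++ [4] ++ sEnc (1 + Nat.log 2 m) (j-1)
      = (W j).reverse ++ ([4] ++ sEnc (1 + Nat.log 2 m) (j-1)) by simp]
  rw [List.drop_append_of_le_length (by rw [List.length_reverse, hWj]; omega)]
  rw [hrev]
  simp
theorem occ_char {m ℓ : ℕ} {W : ℕ → List ℕ} (hm : 1 ≤ m) (hℓ : 1 ≤ ℓ)
    (hWlen : ∀ i, 1 ≤ i → i ≤ m → (W i).length = ℓ)
    (hWbin : ∀ i, 1 ≤ i → i ≤ m → ∀ a ∈ W i, a < 2)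
    (X : List ℕ) (hX : X.length ≤ ℓ) :
    {p : ℕ | 1 ≤ p ∧ p ≤ m * (ℓ + Nat.log 2 m + 2) ∧
        (X.reverse ++ [4]) <+: (SeqToString m W).drop (p - 1)}
      = (fun j => (j-1) * (ℓ + Nat.log 2 m + 2) + (ℓ - X.length) + 1) ''
        {j | 1 ≤ j ∧ j ≤ m ∧ X <+: W j} := by
  have hT : (SeqToString m W).length = m * (ℓ + Nat.log 2 m + 2) := T_length hWlen
  ext p
  simp only [Set.mem_setOf_eq, Set.mem_image]
  constructor
  · rintro ⟨hp1, hp2, hpre⟩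
    have hlen := hpre.length_le
    rw [List.length_append, List.length_reverse, List.length_drop, hT] at hlen
    simp only [List.length_singleton] at hlen
    have hidx : (p - 1) + X.length < m * (ℓ + Nat.log 2 m + 2) := by omega
    have h4 : (SeqToString m W)[(p-1) + X.length]? = some 4 := by
      rw [← List.getElem?_drop]
      obtain ⟨t, ht⟩ := hpre
      rw [← ht, show (X.reverse ++ [4]) ++ t = X.reverse ++ ([4] ++ t) by simp,
        List.getElem?_append_right (by simp), List.length_reverse]
      simp
    have hmod := (char4 hWlen hWbin _ hidx).mp h4
    obtain ⟨q, hq⟩ : ∃ q, (p - 1) + X.length = q * (ℓ + Nat.log 2 m + 2) + ℓ := by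
      refine ⟨((p-1) + X.length) / (ℓ + Nat.log 2 m + 2), ?_⟩
      have h := Nat.div_add_mod ((p-1) + X.length) (ℓ + Nat.log 2 m + 2)
      rw [hmod, mul_comm] at h
      omega
    have hqm : q < m := by
      by_contra h
      push_neg at h
      have := Nat.mul_le_mul_right (ℓ + Nat.log 2 m + 2) h
      omega
    have hp : p - 1 = q * (ℓ + Nat.log 2 m + 2) + (ℓ - X.length) := by omega
    refine ⟨q+1, ⟨by omega, by omega, ?_⟩, by simp only [Nat.add_sub_cancel]; omega⟩
    rw [hp, T_drop hWlen q (ℓ - X.length) hqm (by omega)] at hpre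
    have hWq : (W (q+1)).length = ℓ := hWlen (q+1) (by omega) (by omega)
    rw [BlkF, show (W (q+1)).reverse ++ [4] ++ sEnc (1 + Nat.log 2 m) q
        = (W (q+1)).reverse ++ ([4] ++ sEnc (1 + Nat.log 2 m) q) by simp,
      List.drop_append_of_le_length (by rw [List.length_reverse, hWq]; omega)] at hpre
    have hAlen : ((W (q+1)).reverse.drop (ℓ - X.length)).length = X.length := by
      rw [List.length_drop, List.length_reverse, hWq]; omega
    obtain ⟨t, ht⟩ := hpre
    have h1 : ((X.reverse ++ [4]) ++ t).take X.length = X.reverse := by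
      rw [List.take_append_of_le_length (by simp),
        List.take_append_of_le_length (by simp), List.take_of_length_le (by simp)]
    rw [ht, List.take_append_of_le_length (by rw [List.length_append, hAlen]; omega),
      List.take_append_of_le_length (by rw [hAlen]),
      List.take_of_length_le hAlen.le] at h1
    have hXA : (W (q+1)).take X.length = X := by
      have h2 := congrArg List.reverse h1
      rw [List.reverse_reverse, List.drop_reverse, List.reverse_reverse, hWq,
        show ℓ - (ℓ - X.length) = X.length by omega] at h2
      exact h2
    exact List.prefix_iff_eq_take.mpr hXA.symm
  · rintro ⟨j, ⟨hj1, hjm, hpre⟩, rfl⟩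
    have hmul : (j - 1 + 1) * (ℓ + Nat.log 2 m + 2)
        = (j-1) * (ℓ + Nat.log 2 m + 2) + (ℓ + Nat.log 2 m + 2) := by ring
    have hle := Nat.mul_le_mul_right (ℓ + Nat.log 2 m + 2) (show j - 1 + 1 ≤ m by omega)
    have key : (j-1) * (ℓ + Nat.log 2 m + 2) + (ℓ + Nat.log 2 m + 2)
        ≤ m * (ℓ + Nat.log 2 m + 2) := by rw [← hmul]; exact hle
    refine ⟨by omega, by omega, ?_⟩
    rw [show (j-1) * (ℓ + Nat.log 2 m + 2) + (ℓ - X.length) + 1 - 1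
        = (j-1) * (ℓ + Nat.log 2 m + 2) + (ℓ - X.length) by omega,
      suffix_at hWlen X hX j hj1 hjm hpre]
    exact List.prefix_append _ _
theorem pos_lex {m ℓ : ℕ} {W : ℕ → List ℕ}
    (hWlen : ∀ i, 1 ≤ i → i ≤ m → (W i).length = ℓ)
    (X : List ℕ) (hX : X.length ≤ ℓ) (j j' : ℕ)
    (hj1 : 1 ≤ j) (hjm : j ≤ m) (hpre : X <+: W j)
    (hj1' : 1 ≤ j') (hjm' : j' ≤ m) (hpre' : X <+: W j')
    (hlt : j < j') :
    List.Lex (· < ·)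
      ((SeqToString m W).drop ((j-1) * (ℓ + Nat.log 2 m + 2) + (ℓ - X.length)))
      ((SeqToString m W).drop ((j'-1) * (ℓ + Nat.log 2 m + 2) + (ℓ - X.length))) := by
  rw [suffix_at hWlen X hX j hj1 hjm hpre, suffix_at hWlen X hX j' hj1' hjm' hpre']
  apply List.Lex.append_left
  apply lexAppendBoth _ (by rw [sEnc_length, sEnc_length])
  apply lexMapMono (f := (· + 2)) (fun a b h => Nat.add_lt_add_right h 2)
  apply binSym_lex
  · omega
  · have h2 := Nat.lt_pow_succ_log_self (b := 2) (by norm_num) m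
    rw [Nat.succ_eq_add_one, Nat.add_comm] at h2
    omega
theorem ncard_Icc_nat (a b : ℕ) : (Set.Icc a b).ncard = b + 1 - a := by
  rw [← Finset.coe_Icc, Set.ncard_coe_finset, Nat.card_Icc]
theorem downward_closed_eq_Icc (n : ℕ) (A : Set ℕ) (hsub : A ⊆ Set.Icc 1 n)
    (hdc : ∀ t ∈ A, ∀ s, 1 ≤ s → s ≤ t → s ∈ A) : A = Set.Icc 1 A.ncard := by
  have hfin : A.Finite := (Set.finite_Icc 1 n).subset hsub
  rcases A.eq_empty_or_nonempty with rfl | hne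
  · simp
  · obtain ⟨M, hM, hmax⟩ : ∃ M ∈ A, ∀ a ∈ A, id M ≤ id a → id M = id a := by
      obtain ⟨M, hM, hM'⟩ := Set.exists_max_image A id hfin hne
      exact ⟨M, hM, fun a ha h => le_antisymm h (hM' a ha)⟩
    have hmax' : ∀ a ∈ A, a ≤ M := by
      intro a ha
      by_contra h
      push_neg at h
      have := hmax a ha (le_of_lt h)
      simp only [id] at this
      omega
    have hEq : A = Set.Icc 1 M := by
      ext a
      constructor
      · intro ha; exact ⟨(hsub ha).1, hmax' a ha⟩
      · intro ha; exact hdc M hM a ha.1 ha.2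
    have hM1 : 1 ≤ M := (hsub hM).1
    have hcard : A.ncard = M := by
      rw [hEq, ncard_Icc_nat]; omega
    rw [hcard, hEq]

theorem stmt4 (m ℓ : ℕ) (hm : 1 ≤ m) (hℓ : 1 ≤ ℓ) (W : ℕ → List ℕ)
    (hWlen : ∀ i, 1 ≤ i → i ≤ m → (W i).length = ℓ)
    (hWbin : ∀ i, 1 ≤ i → i ≤ m → ∀ a ∈ W i, a < 2)
    (sa : ℕ → ℕ) (hsa : IsSuffixArray (SeqToString m W) sa)
    (X : List ℕ) (hXlen : X.length ≤ ℓ) (hXbin : ∀ a ∈ X, a < 2)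
    (i : ℕ) (hi1 : 1 ≤ i) (hi2 : i ≤ PrefixRank W m X) :
    IsKthSmallest { j | 1 ≤ j ∧ j ≤ m ∧ X <+: W j } i
      (cdiv (sa (RangeBeg (X.reverse ++ [4]) (SeqToString m W) + i))
        (ℓ + Nat.log 2 m + 2)) := by
  classical
  have hT : (SeqToString m W).length = m * (ℓ + Nat.log 2 m + 2) := T_length hWlen
  set P : List ℕ := X.reverse ++ [4] with hPdef
  set J : Set ℕ := {j | 1 ≤ j ∧ j ≤ m ∧ X <+: W j} with hJdef
  set pos : ℕ → ℕ :=
    fun j => (j-1) * (ℓ + Nat.log 2 m + 2) + (ℓ - X.length) + 1 with hposdef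
  set K := RangeBeg P (SeqToString m W) with hKdef
  set c := PrefixRank W m X with hcdef
  obtain ⟨hsa1, hsa2, hsa3⟩ := hsa
  simp only [hT] at hsa1 hsa2 hsa3
  have hcJ : J.ncard = c := rfl
  have hJfin : J.Finite :=
    Set.Finite.subset (Set.finite_Icc 1 m) (fun j hj => ⟨hj.1, hj.2.1⟩)
  have hposInj : Set.InjOn pos J := by
    intro a ha b hb hab
    simp only [hposdef] at hab
    have h1 : (a-1) * (ℓ + Nat.log 2 m + 2) = (b-1) * (ℓ + Nat.log 2 m + 2) := by omega
    have h2 := Nat.eq_of_mul_eq_mul_right (show 0 < ℓ + Nat.log 2 m + 2 by omega) h1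
    have ha1 := ha.1
    have hb1 := hb.1
    omega
  set Pf : Set ℕ := {p | 1 ≤ p ∧ p ≤ m * (ℓ + Nat.log 2 m + 2) ∧
      P <+: (SeqToString m W).drop (p-1)} with hPfdef
  have hPf : Pf = pos '' J := occ_char hm hℓ hWlen hWbin X hXlen
  set Lt : Set ℕ := {p | 1 ≤ p ∧ p ≤ (SeqToString m W).length ∧
      LexLt (Suf (SeqToString m W) p) P} with hLtdef
  have hKLt : Lt.ncard = K := rfl
  have hPffin : Pf.Finite := by rw [hPf]; exact hJfin.image pos
  have hLtfin : Lt.Finite :=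
    Set.Finite.subset (Set.finite_Icc 1 (m * (ℓ + Nat.log 2 m + 2)))
      (fun p hp => ⟨hp.1, by have := hp.2.1; omega⟩)
  have hPfcard : Pf.ncard = c := by
    rw [hPf, Set.ncard_image_of_injOn hposInj, hcJ]
  have hdisj : Disjoint Lt Pf := by
    rw [Set.disjoint_left]
    intro p hpLt hpPf
    obtain ⟨t, ht⟩ := hpPf.2.2
    have hlex : List.Lex (· < ·) ((SeqToString m W).drop (p-1)) P := hpLt.2.2
    rw [← ht] at hlex
    exact notLexAppendSelf P t hlex
  have hsaInj : ∀ t t', 1 ≤ t → t ≤ m * (ℓ + Nat.log 2 m + 2) → 1 ≤ t' →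
      t' ≤ m * (ℓ + Nat.log 2 m + 2) → sa t = sa t' → t = t' := by
    intro t t' h1 h2 h3 h4 heq
    rcases Nat.lt_trichotomy t t' with h | h | h
    · exfalso
      have hlex := hsa3 t t' h1 h h4
      rw [heq] at hlex
      exact irrefl_of (List.Lex (· < ·)) _ hlex
    · exact h
    · exfalso
      have hlex := hsa3 t' t h3 h h2
      rw [heq] at hlex
      exact irrefl_of (List.Lex (· < ·)) _ hlex
  set D0 : Set ℕ := {t | 1 ≤ t ∧ t ≤ m * (ℓ + Nat.log 2 m + 2) ∧ sa t ∈ Lt} with hD0def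
  set D : Set ℕ := {t | 1 ≤ t ∧ t ≤ m * (ℓ + Nat.log 2 m + 2) ∧ sa t ∈ Lt ∪ Pf}
    with hDdef
  have hLtB : ∀ p ∈ Lt, 1 ≤ p ∧ p ≤ m * (ℓ + Nat.log 2 m + 2) := by
    intro p hp
    exact ⟨hp.1, by have := hp.2.1; omega⟩
  have hPfB : ∀ p ∈ Pf, 1 ≤ p ∧ p ≤ m * (ℓ + Nat.log 2 m + 2) := by
    intro p hp
    exact ⟨hp.1, hp.2.1⟩
  have hD0img : sa '' D0 = Lt := by
    ext p
    constructor
    · rintro ⟨t, ht, rfl⟩; exact ht.2.2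
    · intro hp
      obtain ⟨t, h1, h2, h3⟩ := hsa2 p (hLtB p hp).1 (hLtB p hp).2
      exact ⟨t, ⟨h1, h2, h3 ▸ hp⟩, h3⟩
  have hDimg : sa '' D = Lt ∪ Pf := by
    ext p
    constructor
    · rintro ⟨t, ht, rfl⟩; exact ht.2.2
    · intro hp
      have hpB : 1 ≤ p ∧ p ≤ m * (ℓ + Nat.log 2 m + 2) := by
        rcases hp with h | h
        · exact hLtB p h
        · exact hPfB p h
      obtain ⟨t, h1, h2, h3⟩ := hsa2 p hpB.1 hpB.2
      exact ⟨t, ⟨h1, h2, h3 ▸ hp⟩, h3⟩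
  have hD0sub : D0 ⊆ Set.Icc 1 (m * (ℓ + Nat.log 2 m + 2)) :=
    fun t ht => ⟨ht.1, ht.2.1⟩
  have hDsub : D ⊆ Set.Icc 1 (m * (ℓ + Nat.log 2 m + 2)) :=
    fun t ht => ⟨ht.1, ht.2.1⟩
  have hinj0 : Set.InjOn sa D0 :=
    fun t ht t' ht' h => hsaInj t t' ht.1 ht.2.1 ht'.1 ht'.2.1 h
  have hinjD : Set.InjOn sa D :=
    fun t ht t' ht' h => hsaInj t t' ht.1 ht.2.1 ht'.1 ht'.2.1 h
  have hD0card : D0.ncard = K := by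
    rw [← hKLt, ← hD0img, Set.ncard_image_of_injOn hinj0]
  have hDcard : D.ncard = K + c := by
    have hu : (Lt ∪ Pf).ncard = K + c := by
      rw [Set.ncard_union_eq hdisj hLtfin hPffin, hKLt, hPfcard]
    rw [← hu, ← hDimg, Set.ncard_image_of_injOn hinjD]
  have hD0dc : ∀ t ∈ D0, ∀ s, 1 ≤ s → s ≤ t → s ∈ D0 := by
    intro t ht s hs1 hs2
    rcases eq_or_lt_of_le hs2 with rfl | hltst
    · exact ht
    · have ht1 := ht.1
      have ht2 := ht.2.1
      have hlex := hsa3 s t hs1 hltst ht2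
      have hb := hsa1 s hs1 (by omega)
      refine ⟨hs1, by omega, hb.1, by omega, ?_⟩
      exact List.lex_trans Nat.lt_trans hlex ht.2.2.2.2
  have hDdc : ∀ t ∈ D, ∀ s, 1 ≤ s → s ≤ t → s ∈ D := by
    intro t ht s hs1 hs2
    rcases eq_or_lt_of_le hs2 with rfl | hltst
    · exact ht
    · have ht1 := ht.1
      have ht2 := ht.2.1
      have hlex := hsa3 s t hs1 hltst ht2
      have hb := hsa1 s hs1 (by omega)
      refine ⟨hs1, by omega, ?_⟩
      rcases ht.2.2 with h | h
      · exact Or.inl ⟨hb.1, by omega, List.lex_trans Nat.lt_trans hlex h.2.2⟩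
      · obtain ⟨u, hu⟩ := h.2.2
        have hlex' : List.Lex (· < ·) (Suf (SeqToString m W) (sa s)) (P ++ u) := by
          rw [hu]
          exact hlex
        rcases lexOfLexAppend P hlex' with h' | h'
        · exact Or.inl ⟨hb.1, by omega, h'⟩
        · exact Or.inr ⟨hb.1, hb.2, h'⟩
  have hD0eq : D0 = Set.Icc 1 K := by
    have h := downward_closed_eq_Icc _ D0 hD0sub hD0dc
    rw [hD0card] at h
    exact h
  have hDeq : D = Set.Icc 1 (K + c) := by
    have h := downward_closed_eq_Icc _ D hDsub hDdc
    rw [hDcard] at h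
    exact h
  have hc1 : 1 ≤ c := le_trans hi1 hi2
  have hQPf : ∀ t, K+1 ≤ t → t ≤ K+c →
      1 ≤ t ∧ t ≤ m * (ℓ + Nat.log 2 m + 2) ∧ sa t ∈ Pf := by
    intro t h1 h2
    have htD : t ∈ D := by
      rw [hDeq]
      exact ⟨by omega, by omega⟩
    obtain ⟨ht1, ht2, ht3⟩ := htD
    refine ⟨ht1, ht2, ?_⟩
    rcases ht3 with h | h
    · exfalso
      have : t ∈ D0 := ⟨ht1, ht2, h⟩
      rw [hD0eq] at this
      have := this.2
      omega
    · exact h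
  have hKcn : K + c ≤ m * (ℓ + Nat.log 2 m + 2) := by
    have h : K + c ∈ D := by
      rw [hDeq]
      exact ⟨by omega, le_refl _⟩
    exact h.2.1
  have hex : ∀ t, K+1 ≤ t → t ≤ K+c → ∃ j, j ∈ J ∧ pos j = sa t := by
    intro t h1 h2
    have h := (hQPf t h1 h2).2.2
    rw [hPf] at h
    obtain ⟨j, hj, hjeq⟩ := h
    exact ⟨j, hj, hjeq⟩
  set jm : ℕ → ℕ :=
    fun t => if h : ∃ j, j ∈ J ∧ pos j = sa t then h.choose else 0 with hjmdef
  have hjmspec : ∀ t, K+1 ≤ t → t ≤ K+c → jm t ∈ J ∧ pos (jm t) = sa t := by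
    intro t h1 h2
    have h := hex t h1 h2
    simp only [hjmdef, dif_pos h]
    exact h.choose_spec
  have hsuf : ∀ jj ∈ J, Suf (SeqToString m W) (pos jj)
      = (SeqToString m W).drop ((jj-1) * (ℓ + Nat.log 2 m + 2) + (ℓ - X.length)) := by
    intro jj hjj
    simp only [Suf, hposdef, Nat.add_sub_cancel]
  have hlexpos : ∀ a ∈ J, ∀ b ∈ J, a < b →
      List.Lex (· < ·) (Suf (SeqToString m W) (pos a)) (Suf (SeqToString m W) (pos b)) := by
    intro a ha b hb hab
    rw [hsuf a ha, hsuf b hb]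
    exact pos_lex hWlen X hXlen a b ha.1 ha.2.1 ha.2.2 hb.1 hb.2.1 hb.2.2 hab
  have hjmono : ∀ t t', K+1 ≤ t → t ≤ K+c → K+1 ≤ t' → t' ≤ K+c → t < t' →
      jm t < jm t' := by
    intro t t' h1 h2 h3 h4 htt'
    obtain ⟨hJt, hpt⟩ := hjmspec t h1 h2
    obtain ⟨hJt', hpt'⟩ := hjmspec t' h3 h4
    have hlex := hsa3 t t' (by omega) htt' (by omega)
    rcases Nat.lt_trichotomy (jm t) (jm t') with h | h | h
    · exact h
    · exfalso
      have heq : sa t = sa t' := by rw [← hpt, ← hpt', h]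
      rw [heq] at hlex
      exact irrefl_of (List.Lex (· < ·)) _ hlex
    · exfalso
      have := hlexpos _ hJt' _ hJt h
      rw [hpt, hpt'] at this
      exact asymm_of (List.Lex (· < ·)) this hlex
  have hjsurj : ∀ jj ∈ J, ∃ t, (K+1 ≤ t ∧ t ≤ K+c) ∧ jm t = jj := by
    intro jj hjj
    have hposmem : pos jj ∈ Pf := by
      rw [hPf]
      exact ⟨jj, hjj, rfl⟩
    obtain ⟨t, ht1, ht2, ht3⟩ := hsa2 (pos jj) hposmem.1 hposmem.2.1
    have htD : t ∈ D := ⟨ht1, ht2, Or.inr (by rw [ht3]; exact hposmem)⟩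
    rw [hDeq] at htD
    have htD2 := htD.2
    have htD0 : t ∉ D0 := by
      intro hcon
      have hLtmem : pos jj ∈ Lt := by rw [← ht3]; exact hcon.2.2
      exact Set.disjoint_left.mp hdisj hLtmem hposmem
    have htK : K + 1 ≤ t := by
      by_contra hcon
      push_neg at hcon
      exact htD0 ⟨ht1, ht2, by
        have : t ∈ Set.Icc 1 K := ⟨ht1, by omega⟩
        rw [← hD0eq] at this
        exact this.2.2⟩
    obtain ⟨hJt, hpt⟩ := hjmspec t htK htD2
    exact ⟨t, ⟨htK, htD2⟩, hposInj hJt hjj (by rw [hpt, ht3])⟩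
  obtain ⟨hJ0, hp0⟩ := hjmspec (K + i) (by omega) (by omega)
  have hj01 : 1 ≤ jm (K + i) := hJ0.1
  have hval : cdiv (sa (K + i)) (ℓ + Nat.log 2 m + 2) = jm (K + i) := by
    rw [← hp0]
    simp only [hposdef]
    have harith : (jm (K+i) - 1) * (ℓ + Nat.log 2 m + 2) + (ℓ - X.length) + 1
        + (ℓ + Nat.log 2 m + 2) - 1
        = (ℓ + Nat.log 2 m + 2) * jm (K+i) + (ℓ - X.length) := by
      have hmm : (jm (K+i) - 1 + 1) * (ℓ + Nat.log 2 m + 2)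
          = (jm (K+i) - 1) * (ℓ + Nat.log 2 m + 2) + (ℓ + Nat.log 2 m + 2) := by ring
      have hj : jm (K+i) - 1 + 1 = jm (K+i) := by omega
      rw [hj] at hmm
      rw [mul_comm] at hmm
      omega
    rw [cdiv, harith, Nat.mul_add_div (by omega), Nat.div_eq_of_lt (by omega), add_zero]
  rw [hval]
  have himg : J ∩ Set.Iic (jm (K + i)) = jm '' Set.Icc (K+1) (K+i) := by
    ext a
    constructor
    · rintro ⟨haJ, hale⟩
      obtain ⟨t, ⟨h1, h2⟩, rfl⟩ := hjsurj a haJ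
      refine ⟨t, ⟨h1, ?_⟩, rfl⟩
      by_contra hcon
      push_neg at hcon
      have := hjmono (K+i) t (by omega) (by omega) (by omega) h2 hcon
      simp only [Set.mem_Iic] at hale
      omega
    · rintro ⟨t, ⟨h1, h2⟩, rfl⟩
      have hsp := hjmspec t h1 (by omega)
      refine ⟨hsp.1, ?_⟩
      simp only [Set.mem_Iic]
      rcases eq_or_lt_of_le h2 with rfl | hlt
      · exact le_refl _
      · exact le_of_lt (hjmono t (K+i) h1 (by omega) (by omega) (by omega) hlt)
  have hinjIcc : Set.InjOn jm (Set.Icc (K+1) (K+i)) := by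
    intro a ha b hb hab
    rcases Nat.lt_trichotomy a b with h | h | h
    · exfalso
      have := hjmono a b ha.1 (by have := ha.2; omega) hb.1 (by have := hb.2; omega) h
      omega
    · exact h
    · exfalso
      have := hjmono b a hb.1 (by have := hb.2; omega) ha.1 (by have := ha.2; omega) h
      omega
  refine ⟨hJ0, ?_⟩
  rw [himg, Set.ncard_image_of_injOn hinjIcc, ncard_Icc_nat]
  omega
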